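/- Linear-program reduction, converse direction: let (N, P_S) be a channel with state, M ≥ 2, n ∈ ℕ. Suppose r : 𝒳^n × 𝒴^n × 𝒮^n → ℝ and q : 𝒳^n × 𝒮^n → ℝ satisfy: r ≥ 0; Σ_{x^n} r_{x^n,y^n,s^n} = 1/M for all (y^n, s^n); Σ_{x^n} q_{x^n|s^n} = 1 for all s^n; r_{x^n,y^n,s^n} ≤ q_{x^n|s^n} for all (x^n,y^n,s^n); and for every i ∈ {1,…,n−1}, both Σ_{x_{i+1},…,x_n} r_{x^n,y^n,s^n} and Σ_{x_{i+1},…,x_n} q_{x^n|s^n} are invariant under changes of (s_{i+1},…,s_n). Define Z(x^n, ŵ | w, s^n, y^n) = r_{x^n,y^n,s^n} if ŵ = w and (q_{x^n|s^n} − r_{x^n,y^n,s^n})/(M−1) if ŵ ≠ w. Then Z ∈ 𝒵^{NS,ca}(M,n) (i.e., Z is nonnegative, normalized, and satisfies conditions C1, C2, C3) and η(Z) = Σ_{x^n,y^n,s^n} r_{x^n,y^n,s^n} · P_S^{⊗n}(s^n) · N^{⊗n}(y^n|x^n,s^n). -/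

import Mathlib

open scoped Classical BigOperators
open Finset Filter

noncomputable section

def IsPMF {S : Type*} [Fintype S] (P : S → ℝ) : Prop :=
  (∀ s, 0 ≤ P s) ∧ ∑ s, P s = 1

def IsChannel {X Y S : Type*} [Fintype Y] (N : Y → X → S → ℝ) : Prop :=
  (∀ y x s, 0 ≤ N y x s) ∧ ∀ x s, ∑ y, N y x s = 1

def IsCondPMF {X S : Type*} [Fintype X] (PXS : X → S → ℝ) : Prop :=
  (∀ x s, 0 ≤ PXS x s) ∧ ∀ s, ∑ x, PXS x s = 1

def prodP {S : Type*} (P : S → ℝ) {n : ℕ} (s : Fin n → S) : ℝ := ∏ i, P (s i)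

def prodN {X Y S : Type*} (N : Y → X → S → ℝ) {n : ℕ}
    (y : Fin n → Y) (x : Fin n → X) (s : Fin n → S) : ℝ :=
  ∏ i, N (y i) (x i) (s i)

/-- NS-assisted coding scheme with causal CSIT: nonnegativity, normalization,
and the conditions C1, C2, C3. -/
def IsNSCa {X Y S : Type*} [Fintype X] [Fintype Y] [Fintype S] (M n : ℕ)
    (Z : (Fin n → X) → Fin M → Fin M → (Fin n → S) → (Fin n → Y) → ℝ) : Prop :=
  (∀ x wh w s y, 0 ≤ Z x wh w s y) ∧
  (∀ w s y, ∑ x, ∑ wh, Z x wh w s y = 1) ∧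
  (∀ x w s y y', ∑ wh, Z x wh w s y = ∑ wh, Z x wh w s y') ∧
  (∀ wh w w' s s' y, ∑ x, Z x wh w s y = ∑ x, Z x wh w' s' y) ∧
  (∀ i : ℕ, 1 ≤ i → i < n →
    ∀ (x : Fin n → X) wh w s s' y, (∀ j : Fin n, (j : ℕ) < i → s j = s' j) →
      ∑ x' ∈ univ.filter (fun x' : Fin n → X => ∀ j : Fin n, (j : ℕ) < i → x' j = x j),
        Z x' wh w s y =
      ∑ x' ∈ univ.filter (fun x' : Fin n → X => ∀ j : Fin n, (j : ℕ) < i → x' j = x j),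
        Z x' wh w s' y)

def etaNS {X Y S : Type*} [Fintype X] [Fintype Y] [Fintype S]
    (N : Y → X → S → ℝ) (P : S → ℝ) (M n : ℕ)
    (Z : (Fin n → X) → Fin M → Fin M → (Fin n → S) → (Fin n → Y) → ℝ) : ℝ :=
  (1 / (M : ℝ)) * ∑ w, ∑ x, ∑ s, ∑ y, prodP P s * prodN N y x s * Z x w w s y

def etaNSOpt {X Y S : Type*} [Fintype X] [Fintype Y] [Fintype S]
    (N : Y → X → S → ℝ) (P : S → ℝ) (M n : ℕ) : ℝ :=
  sSup {e : ℝ | ∃ Z : (Fin n → X) → Fin M → Fin M → (Fin n → S) → (Fin n → Y) → ℝ,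
    IsNSCa M n Z ∧ etaNS N P M n Z = e}

/-- The length-`(j+1)` prefix `s^{j+1}` of a state sequence. -/
def prefixS {S : Type*} {n : ℕ} (s : Fin n → S) (j : Fin n) : Fin ((j : ℕ) + 1) → S :=
  fun k => s ⟨k, Nat.lt_of_le_of_lt (Nat.le_of_lt_succ k.isLt) j.isLt⟩

/-- A classical coding scheme with causal CSIT. -/
structure ClassicalCa (X S Y : Type*) [Fintype X] (M n : ℕ) where
  Q : Type
  fq : Fintype Q
  PQ : Q → ℝ
  E : (j : Fin n) → X → (Fin (j : ℕ) → X) → Fin M → (Fin ((j : ℕ) + 1) → S) → Q → ℝ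
  D : Fin M → (Fin n → Y) → Q → ℝ
  PQ_nonneg : ∀ q, 0 ≤ PQ q
  PQ_sum : ∑ q ∈ @Finset.univ Q fq, PQ q = 1
  E_nonneg : ∀ j xj h w sj q, 0 ≤ E j xj h w sj q
  E_sum : ∀ j h w sj q, ∑ xj, E j xj h w sj q = 1
  D_nonneg : ∀ wh y q, 0 ≤ D wh y q
  D_sum : ∀ y q, ∑ wh, D wh y q = 1

def etaC {X Y S : Type*} [Fintype X] [Fintype Y] [Fintype S]
    (N : Y → X → S → ℝ) (P : S → ℝ) (M n : ℕ) (C : ClassicalCa X S Y M n) : ℝ :=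
  (1 / (M : ℝ)) * ∑ w : Fin M, ∑ q ∈ @Finset.univ C.Q C.fq, C.PQ q *
    ∑ x : Fin n → X, ∑ s : Fin n → S, ∑ y : Fin n → Y,
      prodP P s *
      (∏ j, C.E j (x j) (fun k => x ⟨k, k.isLt.trans j.isLt⟩) w (prefixS s j) q) *
      prodN N y x s * C.D w y q

def etaCOpt {X Y S : Type*} [Fintype X] [Fintype Y] [Fintype S]
    (N : Y → X → S → ℝ) (P : S → ℝ) (M n : ℕ) : ℝ :=
  sSup {e : ℝ | ∃ C : ClassicalCa X S Y M n, etaC N P M n C = e}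

/-- Conditional mutual information I(X;Y|S) for the joint distribution
P_{XYS}(x,y,s) = P_S(s) P_{X|S}(x|s) N(y|x,s), in bits. -/
def condMI {X Y S : Type*} [Fintype X] [Fintype Y] [Fintype S]
    (N : Y → X → S → ℝ) (P : S → ℝ) (PXS : X → S → ℝ) : ℝ :=
  ∑ x, ∑ y, ∑ s,
    (P s * PXS x s * N y x s) *
      Real.logb 2 ((P s * PXS x s * N y x s) * P s /
        ((∑ y', P s * PXS x s * N y' x s) * (∑ x', P s * PXS x' s * N y x' s)))

/-- Transition function of the Z0/Z1 channel (arguments: output, input, state). -/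
def NZ (y x s : Bool) : ℝ := if x = s then (if y = x then 1 else 0) else 1 / 2

/-- The uniform state distribution of the Z0/Z1 channel. -/
def PZ (_ : Bool) : ℝ := 1 / 2

/-- The channel with CSIR associated to a channel with state. -/
def NCSIR {X Y S : Type*} (N : Y → X → S → ℝ) : (Y × S) → X → S → ℝ :=
  fun ys x s => if ys.2 = s then N ys.1 x s else 0


lemma sum_if_fin {M : ℕ} (w : Fin M) (a b : ℝ) :
    ∑ wh : Fin M, (if wh = w then a else b) = a + ((M : ℝ) - 1) * b := by
  have h : ∀ wh : Fin M, (if wh = w then a else b) = b + (if wh = w then a - b else 0) := by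
    intro wh; split <;> ring
  simp only [h, Finset.sum_add_distrib, Finset.sum_const, Finset.sum_ite_eq',
    Finset.mem_univ, if_true, Finset.card_univ, Fintype.card_fin, nsmul_eq_mul]
  ring

/-- LP reduction, converse direction: from feasible LP variables
`r, q` one constructs an NS-assisted causal-CSIT scheme `Z` whose success
probability is the LP objective value. -/
theorem lp_reduction_converse {X Y S : Type*} [Fintype X] [Fintype Y] [Fintype S]
    [Nonempty X] [Nonempty Y] [Nonempty S]
    (N : Y → X → S → ℝ) (P : S → ℝ) (hN : IsChannel N) (hP : IsPMF P)
    (M n : ℕ) (hM : 2 ≤ M)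
    (r : (Fin n → X) → (Fin n → Y) → (Fin n → S) → ℝ)
    (q : (Fin n → X) → (Fin n → S) → ℝ)
    (hr0 : ∀ x y s, 0 ≤ r x y s)
    (hrsum : ∀ y s, ∑ x, r x y s = 1 / (M : ℝ))
    (hqsum : ∀ s, ∑ x, q x s = 1)
    (hrq : ∀ x y s, r x y s ≤ q x s)
    (hrcausal : ∀ i : ℕ, 1 ≤ i → i < n →
      ∀ (x : Fin n → X) (y : Fin n → Y) (s s' : Fin n → S),
        (∀ j : Fin n, (j : ℕ) < i → s j = s' j) →
        (∑ x' ∈ univ.filter (fun x' : Fin n → X => ∀ j : Fin n, (j : ℕ) < i → x' j = x j),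
            r x' y s) =
          ∑ x' ∈ univ.filter (fun x' : Fin n → X => ∀ j : Fin n, (j : ℕ) < i → x' j = x j),
            r x' y s')
    (hqcausal : ∀ i : ℕ, 1 ≤ i → i < n →
      ∀ (x : Fin n → X) (s s' : Fin n → S),
        (∀ j : Fin n, (j : ℕ) < i → s j = s' j) →
        (∑ x' ∈ univ.filter (fun x' : Fin n → X => ∀ j : Fin n, (j : ℕ) < i → x' j = x j),
            q x' s) =
          ∑ x' ∈ univ.filter (fun x' : Fin n → X => ∀ j : Fin n, (j : ℕ) < i → x' j = x j),
            q x' s') :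
    let Z : (Fin n → X) → Fin M → Fin M → (Fin n → S) → (Fin n → Y) → ℝ :=
      fun x wh w s y => if wh = w then r x y s else (q x s - r x y s) / ((M : ℝ) - 1)
    IsNSCa M n Z ∧ etaNS N P M n Z = ∑ x, ∑ y, ∑ s, r x y s * prodP P s * prodN N y x s := by
  intro Z
  have hM2 : (2 : ℝ) ≤ (M : ℝ) := by exact_mod_cast hM
  have hM0 : ((M : ℝ) - 1) ≠ 0 := by linarith
  have hMne : (M : ℝ) ≠ 0 := by linarith
  have hwh' : ∀ x (w : Fin M) s y, ∑ wh : Fin M, Z x wh w s y = q x s := by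
    intro x w s y
    simp only [Z, sum_if_fin]
    field_simp
    ring
  have hC2 : ∀ (wh w : Fin M) s y, ∑ x, Z x wh w s y = 1 / (M : ℝ) := by
    intro wh w s y
    simp only [Z]
    by_cases h : wh = w
    · simp only [h, if_true, hrsum]
    · simp only [h, if_false]
      rw [← Finset.sum_div, Finset.sum_sub_distrib, hqsum, hrsum]
      field_simp
  constructor
  · refine ⟨?_, ?_, ?_, ?_, ?_⟩
    · intro x wh w s y
      simp only [Z]
      split
      · exact hr0 x y s
      · exact div_nonneg (by linarith [hrq x y s]) (by linarith)
    · intro w s y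
      simp only [hwh']
      exact hqsum s
    · intro x w s y y'
      rw [hwh', hwh']
    · intro wh w w' s s' y
      rw [hC2, hC2]
    · intro i hi1 hin x wh w s s' y hss
      by_cases h : wh = w
      · simp only [Z, h, if_true]
        exact hrcausal i hi1 hin x y s s' hss
      · simp only [Z, h, if_false]
        rw [← Finset.sum_div, ← Finset.sum_div, Finset.sum_sub_distrib,
          Finset.sum_sub_distrib, hrcausal i hi1 hin x y s s' hss,
          hqcausal i hi1 hin x s s' hss]
  · unfold etaNS
    have hZ : ∀ (w : Fin M) x s y, Z x w w s y = r x y s := by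
      intro w x s y; simp [Z]
    simp only [hZ]
    rw [Finset.sum_const, Finset.card_univ, Fintype.card_fin, nsmul_eq_mul, ← mul_assoc,
      one_div, inv_mul_cancel₀ hMne, one_mul]
    refine Finset.sum_congr rfl fun x _ => ?_
    rw [Finset.sum_comm]
    exact Finset.sum_congr rfl fun y _ => Finset.sum_congr rfl fun s _ => by ring

end
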